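/- Let S = ∑_{k=0}^∞ ln(1 + 2⁻ᵏ). If 0 ≤ x < S, then for every n ≥ 0 the residual of the exponential recurrence satisfies 0 ≤ Lₙ < ∑_{k=n}^∞ ln(1 + 2⁻ᵏ). -/

import Mathlib

open Real

/-- `log (1+t) ≤ t - t²/6` for `0 ≤ t ≤ 2`. -/
lemma log_upper {t : ℝ} (h0 : 0 ≤ t) (h2 : t ≤ 2) :
    Real.log (1 + t) ≤ t - t ^ 2 / 6 := by
  set g : ℝ → ℝ := fun s => s - s ^ 2 / 6 - Real.log (1 + s) with hg
  have key : MonotoneOn g (Set.Icc 0 2) := by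
    have hderiv : ∀ s ∈ interior (Set.Icc (0:ℝ) 2),
        HasDerivAt g (1 - s / 3 - 1 / (1 + s)) s := by
      intro s hs
      rw [interior_Icc] at hs
      have h1s : (1 : ℝ) + s ≠ 0 := by nlinarith [hs.1]
      have hlog : HasDerivAt (fun y : ℝ => Real.log (1 + y)) (1 / (1 + s)) s := by
        simpa using (((hasDerivAt_id s).const_add 1).log h1s)
      have hpoly : HasDerivAt (fun y : ℝ => y - y ^ 2 / 6) (1 - s / 3) s := by
        have := (hasDerivAt_id s).sub ((hasDerivAt_pow 2 s).div_const 6)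
        refine this.congr_deriv ?_
        norm_num
        ring
      exact hpoly.sub hlog
    apply monotoneOn_of_deriv_nonneg (convex_Icc 0 2)
    · apply ContinuousOn.sub
      · fun_prop
      · apply ContinuousOn.log (by fun_prop)
        intro s hs; nlinarith [hs.1]
    · intro s hs
      exact (hderiv s hs).differentiableAt.differentiableWithinAt
    · intro s hs
      rw [(hderiv s hs).deriv]
      rw [interior_Icc] at hs
      obtain ⟨hs1, hs2⟩ := hs
      have h1 : 0 < 1 + s := by linarith
      rw [sub_nonneg, div_le_iff₀ h1]
      nlinarith
  have := key (Set.mem_Icc.mpr ⟨le_refl 0, by norm_num⟩) (Set.mem_Icc.mpr ⟨h0, h2⟩) h0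
  simp only [hg] at this
  norm_num at this
  nlinarith [this]

/-- `t - t²/2 ≤ log (1+t)` for `0 ≤ t`. -/
lemma log_lower {t : ℝ} (h0 : 0 ≤ t) :
    t - t ^ 2 / 2 ≤ Real.log (1 + t) := by
  set g : ℝ → ℝ := fun s => Real.log (1 + s) - (s - s ^ 2 / 2) with hg
  have key : MonotoneOn g (Set.Ici 0) := by
    have hderiv : ∀ s ∈ interior (Set.Ici (0:ℝ)),
        HasDerivAt g (1 / (1 + s) - (1 - s)) s := by
      intro s hs
      rw [interior_Ici] at hs
      have hs0 : 0 < s := hs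
      have h1s : (1 : ℝ) + s ≠ 0 := by nlinarith
      have hlog : HasDerivAt (fun y : ℝ => Real.log (1 + y)) (1 / (1 + s)) s := by
        simpa using (((hasDerivAt_id s).const_add 1).log h1s)
      have hpoly : HasDerivAt (fun y : ℝ => y - y ^ 2 / 2) (1 - s) s := by
        have := (hasDerivAt_id s).sub ((hasDerivAt_pow 2 s).div_const 2)
        refine this.congr_deriv ?_
        norm_num
      exact hlog.sub hpoly
    apply monotoneOn_of_deriv_nonneg (convex_Ici 0)
    · apply ContinuousOn.sub
      · apply ContinuousOn.log (by fun_prop)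
        intro s hs
        have hs0 : (0:ℝ) ≤ s := hs
        nlinarith
      · fun_prop
    · intro s hs
      exact (hderiv s hs).differentiableAt.differentiableWithinAt
    · intro s hs
      rw [(hderiv s hs).deriv]
      rw [interior_Ici] at hs
      have hs0 : 0 < s := hs
      have h1 : 0 < 1 + s := by linarith
      rw [sub_nonneg, le_div_iff₀ h1]
      nlinarith
  have := key (Set.mem_Ici.mpr (le_refl 0)) (Set.mem_Ici.mpr h0) h0
  simp only [hg] at this
  norm_num at this
  nlinarith [this]

lemma two_zpow_eq (k : ℕ) : (2 : ℝ) ^ (-(k : ℤ)) = (2⁻¹ : ℝ) ^ k := by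
  rw [zpow_neg, zpow_natCast, ← inv_pow]

lemma F_nonneg (k : ℕ) : 0 ≤ Real.log (1 + (2 : ℝ) ^ (-(k : ℤ))) := by
  apply Real.log_nonneg
  have : (0:ℝ) < (2 : ℝ) ^ (-(k : ℤ)) := zpow_pos (by norm_num) _
  linarith

lemma F_le (k : ℕ) : Real.log (1 + (2 : ℝ) ^ (-(k : ℤ))) ≤ (2⁻¹ : ℝ) ^ k := by
  have hp : (0:ℝ) < (2 : ℝ) ^ (-(k : ℤ)) := zpow_pos (by norm_num) _
  have := Real.log_le_sub_one_of_pos (x := 1 + (2 : ℝ) ^ (-(k : ℤ))) (by linarith)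
  rw [two_zpow_eq] at this ⊢
  linarith

lemma F_summable : Summable (fun k : ℕ => Real.log (1 + (2 : ℝ) ^ (-(k : ℤ)))) :=
  Summable.of_nonneg_of_le F_nonneg F_le
    (summable_geometric_of_lt_one (by norm_num) (by norm_num))

lemma F_tail_summable (n : ℕ) :
    Summable (fun k : ℕ => Real.log (1 + (2 : ℝ) ^ (-((n + k : ℕ) : ℤ)))) := by
  have := (summable_nat_add_iff n).mpr F_summable
  exact this.congr fun k => by rw [show k + n = n + k from by omega]

/-- key: the `n`-th term is at most the tail starting from `n+1`. -/
lemma head_le_tail (n : ℕ) :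
    Real.log (1 + (2 : ℝ) ^ (-(n : ℤ))) ≤
      ∑' k : ℕ, Real.log (1 + (2 : ℝ) ^ (-((n + 1 + k : ℕ) : ℤ))) := by
  set t : ℝ := (2⁻¹ : ℝ) ^ n with ht
  have ht0 : 0 < t := pow_pos (by norm_num) n
  have ht2 : t ≤ 1 := pow_le_one₀ (by norm_num) (by norm_num)
  have h4 : ∀ k : ℕ, ((4:ℝ)⁻¹) ^ k = ((2:ℝ)⁻¹) ^ k * ((2:ℝ)⁻¹) ^ k := by
    intro k; rw [← mul_pow]; norm_num
  have hs : ∀ k : ℕ, (2 : ℝ) ^ (-((n + 1 + k : ℕ) : ℤ)) = (t / 2) * (2⁻¹ : ℝ) ^ k := by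
    intro k
    rw [two_zpow_eq, pow_add, pow_add, ht]
    ring
  have hsum1 : Summable (fun k : ℕ => (t / 2) * (2⁻¹ : ℝ) ^ k) :=
    (summable_geometric_of_lt_one (by norm_num) (by norm_num)).mul_left _
  have heq : ∀ k : ℕ, ((t / 2) * (2⁻¹ : ℝ) ^ k) ^ 2 / 2 = (t ^ 2 / 8) * (4⁻¹ : ℝ) ^ k := by
    intro k
    rw [h4 k]
    ring
  have hsum2 : Summable (fun k : ℕ => ((t / 2) * (2⁻¹ : ℝ) ^ k) ^ 2 / 2) := by
    have : Summable (fun k : ℕ => (t ^ 2 / 8) * ((4⁻¹ : ℝ)) ^ k) :=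
      (summable_geometric_of_lt_one (by norm_num) (by norm_num)).mul_left _
    exact this.congr (fun k => (heq k).symm)
  have hsumlog : Summable (fun k : ℕ => Real.log (1 + (2 : ℝ) ^ (-((n + 1 + k : ℕ) : ℤ)))) :=
    F_tail_summable (n + 1)
  have hterm : ∀ k : ℕ, (t / 2) * (2⁻¹ : ℝ) ^ k - ((t / 2) * (2⁻¹ : ℝ) ^ k) ^ 2 / 2
      ≤ Real.log (1 + (2 : ℝ) ^ (-((n + 1 + k : ℕ) : ℤ))) := by
    intro k
    rw [hs k]
    exact log_lower (by positivity)
  have hle : ∑' k : ℕ, ((t / 2) * (2⁻¹ : ℝ) ^ k - ((t / 2) * (2⁻¹ : ℝ) ^ k) ^ 2 / 2)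
      ≤ ∑' k : ℕ, Real.log (1 + (2 : ℝ) ^ (-((n + 1 + k : ℕ) : ℤ))) :=
    Summable.tsum_le_tsum hterm (hsum1.sub hsum2) hsumlog
  have hc1 : ∑' k : ℕ, (t / 2) * (2⁻¹ : ℝ) ^ k = t := by
    rw [tsum_mul_left, tsum_geometric_of_lt_one (by norm_num) (by norm_num)]
    norm_num
  have hc2 : ∑' k : ℕ, ((t / 2) * (2⁻¹ : ℝ) ^ k) ^ 2 / 2 = t ^ 2 / 6 := by
    rw [tsum_congr heq, tsum_mul_left, tsum_geometric_of_lt_one (by norm_num) (by norm_num)]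
    norm_num
    ring
  have hcompute : ∑' k : ℕ, ((t / 2) * (2⁻¹ : ℝ) ^ k - ((t / 2) * (2⁻¹ : ℝ) ^ k) ^ 2 / 2)
      = t - t ^ 2 / 6 := by
    rw [Summable.tsum_sub hsum1 hsum2, hc1, hc2]
  have hupper : Real.log (1 + (2 : ℝ) ^ (-(n : ℤ))) ≤ t - t ^ 2 / 6 := by
    rw [two_zpow_eq, ← ht]
    exact log_upper (le_of_lt ht0) (by linarith)
  calc Real.log (1 + (2 : ℝ) ^ (-(n : ℤ))) ≤ t - t ^ 2 / 6 := hupper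
    _ = _ := hcompute.symm
    _ ≤ _ := hle

/-- tail splitting -/
lemma tail_split (n : ℕ) :
    (∑' k : ℕ, Real.log (1 + (2 : ℝ) ^ (-((n + k : ℕ) : ℤ))))
      = Real.log (1 + (2 : ℝ) ^ (-(n : ℤ)))
        + ∑' k : ℕ, Real.log (1 + (2 : ℝ) ^ (-((n + 1 + k : ℕ) : ℤ))) := by
  rw [Summable.tsum_eq_zero_add (F_tail_summable n)]
  congr 1
  exact tsum_congr fun k => by rw [show n + (k + 1) = n + 1 + k from by omega]

/-- Restoring shift-and-add recurrence for computing `exp x`: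
`(expRec x n).1 = Lₙ` (residual) and `(expRec x n).2 = Eₙ` (partial product),
with `L₀ = x`, `E₀ = 1`, `dₙ = 1` iff `Lₙ ≥ ln (1 + 2⁻ⁿ)`,
`Lₙ₊₁ = Lₙ - ln (1 + dₙ 2⁻ⁿ)`, `Eₙ₊₁ = Eₙ (1 + dₙ 2⁻ⁿ)`. -/
noncomputable def expRec (x : ℝ) : ℕ → ℝ × ℝ
  | 0 => (x, 1)
  | n + 1 =>
    let p := expRec x n
    if Real.log (1 + (2 : ℝ) ^ (-(n : ℤ))) ≤ p.1 then
      (p.1 - Real.log (1 + (2 : ℝ) ^ (-(n : ℤ))), p.2 * (1 + (2 : ℝ) ^ (-(n : ℤ))))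
    else p

/-- If `0 ≤ x < S = ∑_{k=0}^∞ ln (1 + 2⁻ᵏ)`, then for every `n`,
`0 ≤ Lₙ < ∑_{k=n}^∞ ln (1 + 2⁻ᵏ)`. -/
theorem expRec_residual_bounds (x : ℝ)
    (hx0 : 0 ≤ x) (hxS : x < ∑' k : ℕ, Real.log (1 + (2 : ℝ) ^ (-(k : ℤ)))) (n : ℕ) :
    0 ≤ (expRec x n).1 ∧
      (expRec x n).1 < ∑' k : ℕ, Real.log (1 + (2 : ℝ) ^ (-((n + k : ℕ) : ℤ))) := by
  induction n with
  | zero =>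
    refine ⟨hx0, ?_⟩
    have : (∑' k : ℕ, Real.log (1 + (2 : ℝ) ^ (-((0 + k : ℕ) : ℤ))))
        = ∑' k : ℕ, Real.log (1 + (2 : ℝ) ^ (-(k : ℤ))) :=
      tsum_congr fun k => by rw [Nat.zero_add]
    rw [this]
    exact hxS
  | succ n ih =>
    obtain ⟨h0, h1⟩ := ih
    rw [tail_split n] at h1
    simp only [expRec]
    split_ifs with h
    · constructor
      · simp only [sub_nonneg]; exact h
      · have := sub_lt_sub_right h1 (Real.log (1 + (2 : ℝ) ^ (-(n : ℤ))))
        simpa using this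
    · push_neg at h
      exact ⟨h0, lt_of_lt_of_le h (head_le_tail n)⟩
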